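/- Let A be an n×n symmetric matrix with entries A_{jl} = a_{min(j,l)} for a sequence a_1 ≤ a_2 ≤ ... ≤ a_n with a_1 ≥ 0. Then A is positive semidefinite. -/

import Mathlib

theorem min_structured_matrix_posSemidef (n : ℕ) (a : Fin n → ℝ)
    (ha0 : ∀ h : 0 < n, 0 ≤ a ⟨0, h⟩) (hmono : Monotone a)
    (A : Matrix (Fin n) (Fin n) ℝ) (hA : ∀ j l, A j l = a (min j l)) :
    A.PosSemidef := by
  classical
  set f : ℕ → ℝ := fun i => if h : 0 < i ∧ i ≤ n then a ⟨i - 1, by omega⟩ else 0 with hf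
  have hd : ∀ k ∈ Finset.range n, 0 ≤ f (k + 1) - f k := by
    intro k hk
    simp only [Finset.mem_range] at hk
    rcases Nat.eq_zero_or_pos k with h0 | h0
    · subst h0
      have : f 1 = a ⟨0, by omega⟩ := by
        simp only [hf]
        rw [dif_pos ⟨by omega, by omega⟩]
      have h2 : f 0 = 0 := by simp [hf]
      rw [this, h2]
      simpa using ha0 (by omega)
    · have h1 : f (k + 1) = a ⟨k, by omega⟩ := by
        simp only [hf]
        rw [dif_pos ⟨by omega, by omega⟩]
        exact congrArg a (Fin.ext rfl)
      have h2 : f k = a ⟨k - 1, by omega⟩ := by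
        simp only [hf]
        rw [dif_pos ⟨h0, by omega⟩]
      rw [h1, h2, sub_nonneg]
      exact hmono (Fin.mk_le_mk.mpr (by omega))
  have key : ∀ m : Fin n,
      a m = ∑ k ∈ Finset.range n, (if (k : ℕ) ≤ (m : ℕ) then f (k + 1) - f k else 0) := by
    intro m
    rw [← Finset.sum_filter]
    have hfilt : (Finset.range n).filter (fun k => k ≤ (m : ℕ)) = Finset.range ((m : ℕ) + 1) := by
      ext k
      simp only [Finset.mem_filter, Finset.mem_range]
      constructor
      · rintro ⟨_, h⟩; omega
      · intro h; exact ⟨by omega, by omega⟩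
    rw [hfilt, Finset.sum_range_sub]
    have h0 : f 0 = 0 := by simp [hf]
    have h1 : f ((m : ℕ) + 1) = a m := by
      simp only [hf]
      rw [dif_pos ⟨by omega, by omega⟩]
      exact congrArg a (Fin.ext rfl)
    rw [h0, h1, sub_zero]
  rw [Matrix.posSemidef_iff_dotProduct_mulVec]
  constructor
  · ext j l
    simp [Matrix.conjTranspose_apply, hA, min_comm]
  · intro x
    have hexp : dotProduct (star x) (A.mulVec x)
        = ∑ j, ∑ l, x j * (a (min j l) * x l) := by
      simp [dotProduct, Matrix.mulVec, hA, Finset.mul_sum]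
    rw [hexp]
    set g : ℕ → Fin n → ℝ := fun k i => if k ≤ (i : ℕ) then x i else 0 with hg
    have step : ∀ j l : Fin n, x j * (a (min j l) * x l)
        = ∑ k ∈ Finset.range n, (f (k + 1) - f k) * (g k j * g k l) := by
      intro j l
      rw [key (min j l), Finset.sum_mul, Finset.mul_sum]
      refine Finset.sum_congr rfl fun k _ => ?_
      have hmin : ((min j l : Fin n) : ℕ) = min (j : ℕ) (l : ℕ) := by
        rcases le_total j l with h | h
        · rw [min_eq_left h, min_eq_left (Fin.le_def.mp h)]
        · rw [min_eq_right h, min_eq_right (Fin.le_def.mp h)]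
      by_cases hj : k ≤ (j : ℕ) <;> by_cases hl : k ≤ (l : ℕ) <;>
        simp [hg, hj, hl, hmin, Nat.le_min, if_pos, if_neg] <;> ring
    calc ∑ j, ∑ l, x j * (a (min j l) * x l)
        = ∑ j, ∑ l, ∑ k ∈ Finset.range n, (f (k + 1) - f k) * (g k j * g k l) := by
          exact Finset.sum_congr rfl fun j _ => Finset.sum_congr rfl fun l _ => step j l
      _ = ∑ j, ∑ k ∈ Finset.range n, ∑ l, (f (k + 1) - f k) * (g k j * g k l) :=
          Finset.sum_congr rfl fun j _ => Finset.sum_comm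
      _ = ∑ k ∈ Finset.range n, ∑ j, ∑ l, (f (k + 1) - f k) * (g k j * g k l) :=
          Finset.sum_comm
      _ = ∑ k ∈ Finset.range n, (f (k + 1) - f k) * ((∑ j, g k j) * (∑ l, g k l)) := by
          refine Finset.sum_congr rfl fun k _ => ?_
          rw [Finset.sum_mul_sum, Finset.mul_sum]
          refine Finset.sum_congr rfl fun j _ => ?_
          rw [Finset.mul_sum]
      _ ≥ 0 := by
          apply Finset.sum_nonneg
          intro k hk
          have := hd k hk
          have hsq : (0:ℝ) ≤ (∑ j, g k j) * (∑ l, g k l) := mul_self_nonneg _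
          positivity
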